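/- (Otter's hitting time theorem) Let (W_t) be a random walk with W_0 = k, whose increments Y_i are i.i.d. integer-valued random variables satisfying Y_i ≥ -1 almost surely. Let τ_0 be the first hitting time of 0. Then for all t ≥ 1, P_k(τ_0 = t) = (k/t) · P_k(W_t = 0). -/

import Mathlib

open MeasureTheory Finset

namespace OtterAux

variable (t k : ℕ) (y : ℕ → ℤ)

/-- periodized steps -/
def zz (i : ℕ) : ℤ := y (i % t)

/-- partial sums of the periodized walk -/
def TT (n : ℕ) : ℤ := ∑ i ∈ Finset.range n, zz t y i

/-- running minimum of `TT` over `{0, …, N}` -/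
def MM : ℕ → ℤ
  | 0 => 0
  | (N+1) => min (MM N) (TT t y (N+1))

/-- strict descending ladder point -/
def Ld (n : ℕ) : Prop := ∀ m < n, TT t y n < TT t y m

lemma TT_succ (n : ℕ) : TT t y (n+1) = TT t y n + zz t y n :=
  Finset.sum_range_succ _ _

lemma zz_add_t (ht : 0 < t) (i : ℕ) : zz t y (i + t) = zz t y i := by
  simp [zz, Nat.add_mod_right]

lemma TT_zero : TT t y 0 = 0 := by simp [TT]

variable {t k y}

lemma TT_add_t (ht : 0 < t) (hsum : (k:ℤ) + ∑ i ∈ Finset.range t, y i = 0) :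
    ∀ n, TT t y (n + t) = TT t y n - k := by
  intro n
  induction n with
  | zero =>
      have : TT t y t = ∑ i ∈ Finset.range t, y i := by
        apply Finset.sum_congr rfl
        intro i hi
        simp only [zz]
        rw [Nat.mod_eq_of_lt (Finset.mem_range.mp hi)]
      simp only [Nat.zero_add, TT_zero]
      omega
  | succ n ih =>
      have h1 : n + 1 + t = (n + t) + 1 := by omega
      rw [h1, TT_succ, zz_add_t t y ht, ih, TT_succ]
      ring

lemma TT_add_mul_t (ht : 0 < t) (hsum : (k:ℤ) + ∑ i ∈ Finset.range t, y i = 0) :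
    ∀ q n, TT t y (n + q * t) = TT t y n - q * k := by
  intro q
  induction q with
  | zero => simp
  | succ q ih =>
      intro n
      have h1 : n + (q+1) * t = (n + q * t) + t := by ring
      rw [h1, TT_add_t ht hsum, ih]
      push_cast
      ring

lemma MM_le (N : ℕ) : ∀ m ≤ N, MM t y N ≤ TT t y m := by
  induction N with
  | zero => intro m hm; interval_cases m; simp [MM, TT_zero]
  | succ N ih =>
      intro m hm
      rcases Nat.lt_succ_iff_lt_or_eq.mp (Nat.lt_succ_of_le hm) with h | h
      · exact le_trans (min_le_left _ _) (ih m (by omega))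
      · subst h; exact min_le_right _ _

lemma le_MM_iff (c : ℤ) (N : ℕ) : c ≤ MM t y N ↔ ∀ m ≤ N, c ≤ TT t y m := by
  induction N with
  | zero =>
      constructor
      · intro h m hm; interval_cases m; simpa [MM, TT_zero] using h
      · intro h; simpa [MM, TT_zero] using h 0 (le_refl 0)
  | succ N ih =>
      constructor
      · intro h m hm
        rcases Nat.lt_succ_iff_lt_or_eq.mp (Nat.lt_succ_of_le hm) with h' | h'
        · exact ih.mp (le_trans h (min_le_left _ _)) m (by omega)
        · subst h'; exact le_trans h (min_le_right _ _)
      · intro h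
        exact le_min (ih.mpr fun m hm => h m (by omega)) (h _ le_rfl)

lemma MM_exists (N : ℕ) : ∃ m ≤ N, TT t y m = MM t y N := by
  induction N with
  | zero => exact ⟨0, le_rfl, by simp [MM, TT_zero]⟩
  | succ N ih =>
      rcases ih with ⟨m, hm, hTm⟩
      rcases le_or_gt (MM t y N) (TT t y (N+1)) with h | h
      · exact ⟨m, by omega, by rw [hTm]; exact (min_eq_left h).symm⟩
      · exact ⟨N+1, le_rfl, (min_eq_right h.le).symm⟩

lemma Ld_iff (hge : ∀ i, -1 ≤ y i) (N : ℕ) :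
    Ld t y (N+1) ↔ TT t y (N+1) < MM t y N := by
  have : TT t y (N+1) < MM t y N ↔ TT t y (N+1) + 1 ≤ MM t y N := by omega
  rw [this, le_MM_iff]
  constructor
  · intro h m hm; have := h m (by omega); omega
  · intro h m hm; have := h m (by omega); omega

lemma zz_ge (hge : ∀ i, -1 ≤ y i) (i : ℕ) : -1 ≤ zz t y i := hge _

open Classical in
lemma card_ladder (hge : ∀ i, -1 ≤ y i) (N : ℕ) :
    (((Finset.range (N+1)).filter (Ld t y)).card : ℤ) = 1 - MM t y N := by
  induction N with
  | zero =>
      have h0 : Ld t y 0 := fun m hm => absurd hm (Nat.not_lt_zero m)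
      simp [MM, Finset.filter_singleton, h0]
  | succ N ih =>
      have hstep : TT t y N - 1 ≤ TT t y (N+1) := by
        have := zz_ge hge N (t := t)
        rw [TT_succ]; omega
      have hMN : MM t y N ≤ TT t y N := MM_le N N le_rfl
      rw [Finset.range_add_one, Finset.filter_insert]
      by_cases hL : Ld t y (N+1)
      · have hlt : TT t y (N+1) < MM t y N := (Ld_iff hge N).mp hL
        have hEq : TT t y (N+1) = MM t y N - 1 := by omega
        rw [if_pos hL, Finset.card_insert_of_notMem (by
          intro hmem
          exact absurd (Finset.mem_range.mp (Finset.mem_filter.mp hmem).1) (by omega))]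
        have : MM t y (N+1) = MM t y N - 1 := by
          show min (MM t y N) (TT t y (N+1)) = MM t y N - 1
          omega
        rw [this]
        push_cast
        omega
      · have hge' : MM t y N ≤ TT t y (N+1) := by
          by_contra hc
          exact hL ((Ld_iff hge N).mpr (by omega))
        have : MM t y (N+1) = MM t y N := by
          show min (MM t y N) (TT t y (N+1)) = MM t y N
          omega
        rw [if_neg hL, this, ih]

lemma MM_shift (ht : 0 < t) (hk : 0 < k)
    (hsum : (k:ℤ) + ∑ i ∈ Finset.range t, y i = 0) :
    MM t y (2*t - 1) = MM t y (t - 1) - k := by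
  apply le_antisymm
  · rcases MM_exists (t := t) (y := y) (t-1) with ⟨m, hm, hTm⟩
    have h1 : TT t y (m + t) = MM t y (t-1) - k := by rw [TT_add_t ht hsum, hTm]
    have := MM_le (t := t) (y := y) (2*t - 1) (m + t) (by omega)
    omega
  · rw [le_MM_iff]
    intro m hm
    by_cases hmt : m ≤ t - 1
    · have := MM_le (t := t) (y := y) (t-1) m hmt
      omega
    · have hm' : m - t ≤ t - 1 := by omega
      have h1 : TT t y ((m - t) + t) = TT t y (m-t) - k := TT_add_t ht hsum _
      have h2 : (m - t) + t = m := by omega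
      rw [h2] at h1
      have := MM_le (t := t) (y := y) (t-1) (m-t) hm'
      omega


/-- the "good rotation" predicate, phrased via `TT`. -/
def Gd (t' k' : ℕ) (y' : ℕ → ℤ) (n : ℕ) : Prop :=
  ∀ j < t', TT t' y' (n + j) ≠ TT t' y' n - k'

lemma exists_q {m n : ℕ} (ht : 0 < t) (hmn : m < n) :
    ∃ q, 1 ≤ q ∧ n ≤ m + q * t ∧ m + q * t < n + t := by
  obtain ⟨d, hd⟩ : ∃ d, n = m + d + 1 := ⟨n - m - 1, by omega⟩
  subst hd
  have h3 : (d/t + 1) * t = d/t * t + t := by ring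
  refine ⟨d/t + 1, Nat.succ_le_succ (Nat.zero_le _), ?_, ?_⟩
  · have h1 : d / t * t + d % t = d := Nat.div_add_mod' d t
    have h2 : d % t < t := Nat.mod_lt _ ht
    rw [h3]
    omega
  · have h1 : d/t * t ≤ d := Nat.div_mul_le_self _ _
    rw [h3]
    omega

lemma Gd_of_Ld (ht : 0 < t) (hk : 0 < k) (hsum : (k:ℤ) + ∑ i ∈ Finset.range t, y i = 0)
    {n : ℕ} (hn : t ≤ n) (hL : Ld t y n) : Gd t k y n := by
  intro j hj hEq
  rcases Nat.eq_zero_or_pos j with hj0 | hj0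
  · subst hj0; simp at hEq; omega
  · have hm : n + j - t < n := by omega
    have h2 : (n + j - t) + t = n + j := by omega
    have h3 : TT t y ((n + j - t) + t) = TT t y (n + j - t) - k := TT_add_t ht hsum _
    have h4 := hL (n + j - t) hm
    rw [h2] at h3
    omega

lemma Ld_of_Gd (ht : 0 < t) (hk : 0 < k) (hge : ∀ i, -1 ≤ y i)
    (hsum : (k:ℤ) + ∑ i ∈ Finset.range t, y i = 0)
    {n : ℕ} (hn : t ≤ n) (hG : Gd t k y n) : Ld t y n := by
  have step1 : ∀ j < t, TT t y n - k < TT t y (n + j) := by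
    intro j
    induction j with
    | zero => intro _; simp; omega
    | succ j ih =>
        intro hj
        have h1 := ih (by omega)
        have h2 : TT t y (n + (j+1)) = TT t y (n + j) + zz t y (n + j) := by
          rw [show n + (j+1) = (n + j) + 1 by omega, TT_succ]
        have h3 := zz_ge hge (n + j) (t := t)
        have h4 := hG (j+1) hj
        omega
  intro m hm
  rcases exists_q ht hm with ⟨q, hq1, hq2, hq3⟩
  have hT : TT t y (m + q * t) = TT t y m - q * k := TT_add_mul_t ht hsum q m
  rcases Nat.eq_or_lt_of_le hq2 with hEq | hLt
  · rw [← hEq] at hT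
    have : (1:ℤ) * k ≤ q * k := by
      have : (1:ℤ) ≤ q := by exact_mod_cast hq1
      exact mul_le_mul_of_nonneg_right this (by positivity)
    omega
  · have hj : m + q * t = n + (m + q * t - n) := by omega
    have hjt : m + q * t - n < t := by omega
    have := step1 _ hjt
    rw [← hj, hT] at this
    have : (1:ℤ) * k ≤ q * k := by
      have h5 : (1:ℤ) ≤ q := by exact_mod_cast hq1
      exact mul_le_mul_of_nonneg_right h5 (by positivity)
    omega

lemma Gd_add_t (ht : 0 < t) (hsum : (k:ℤ) + ∑ i ∈ Finset.range t, y i = 0) (r : ℕ) :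
    Gd t k y r ↔ Gd t k y (r + t) := by
  unfold Gd
  constructor
  · intro h j hj
    have h1 : TT t y (r + t + j) = TT t y (r + j) - k := by
      rw [show r + t + j = (r + j) + t by omega, TT_add_t ht hsum]
    have h2 : TT t y (r + t) = TT t y r - k := TT_add_t ht hsum r
    have := h j hj
    omega
  · intro h j hj
    have h1 : TT t y (r + t + j) = TT t y (r + j) - k := by
      rw [show r + t + j = (r + j) + t by omega, TT_add_t ht hsum]
    have h2 : TT t y (r + t) = TT t y r - k := TT_add_t ht hsum r
    have := h j hj
    omega

lemma sum_shift (r j : ℕ) :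
    ∑ i ∈ Finset.range j, zz t y (r + i) = TT t y (r + j) - TT t y r := by
  induction j with
  | zero => simp
  | succ j ih =>
      rw [Finset.sum_range_succ, ih, show r + (j+1) = (r + j) + 1 by omega, TT_succ]
      ring

lemma Gd_iff_good (hk : 0 < k) (r : ℕ) :
    Gd t k y r ↔ ∀ j < t, (k:ℤ) + ∑ i ∈ Finset.range j, y ((r + i) % t) ≠ 0 := by
  unfold Gd
  have hz : ∀ i, y ((r + i) % t) = zz t y (r + i) := fun i => rfl
  constructor
  · intro h j hj
    rw [Finset.sum_congr rfl fun i _ => hz i, sum_shift]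
    have := h j hj
    omega
  · intro h j hj
    have := h j hj
    rw [Finset.sum_congr rfl fun i _ => hz i, sum_shift] at this
    omega

open Classical in
/-- **The cycle lemma**: for steps `≥ -1` summing to `-k`, exactly `k` of the `t`
cyclic rotations avoid hitting `-k` strictly before time `t`. -/
theorem cycle_count (t k : ℕ) (ht : 0 < t) (hk : 0 < k) (y : ℕ → ℤ)
    (hge : ∀ i, -1 ≤ y i) (hsum : (k:ℤ) + ∑ i ∈ Finset.range t, y i = 0) :
    ((Finset.range t).filter
      (fun r => ∀ j < t, (k:ℤ) + ∑ i ∈ Finset.range j, y ((r + i) % t) ≠ 0)).card = k := by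
  -- replace the predicate by `Gd`
  have hfil : (Finset.range t).filter
      (fun r => ∀ j < t, (k:ℤ) + ∑ i ∈ Finset.range j, y ((r + i) % t) ≠ 0) =
      (Finset.range t).filter (Gd t k y) := by
    apply Finset.filter_congr
    intro r _
    exact (Gd_iff_good hk r).symm
  rw [hfil]
  -- counting ladder points
  have h2t : 2*t = (2*t - 1) + 1 := by omega
  have h1t : t = (t - 1) + 1 := by omega
  have hcard2 : (((Finset.range (2*t)).filter (Ld t y)).card : ℤ) = 1 - MM t y (2*t - 1) := by
    rw [h2t]; exact card_ladder hge _
  have hcard1 : (((Finset.range t).filter (Ld t y)).card : ℤ) = 1 - MM t y (t - 1) := by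
    rw [h1t]; exact card_ladder hge _
  have hshift := MM_shift ht hk hsum
  -- split range (2t) into range t and Ico t (2t)
  have hsplit : Finset.range (2*t) = Finset.range t ∪ Finset.Ico t (2*t) := by
    rw [Finset.range_eq_Ico, Finset.range_eq_Ico]
    exact (Finset.Ico_union_Ico_eq_Ico (Nat.zero_le t) (by omega : t ≤ 2*t)).symm
  have hdisj : Disjoint ((Finset.range t).filter (Ld t y))
      ((Finset.Ico t (2*t)).filter (Ld t y)) := by
    apply Finset.disjoint_filter_filter
    rw [Finset.range_eq_Ico]
    exact Finset.Ico_disjoint_Ico_consecutive 0 t (2*t)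
  have hIco : (((Finset.Ico t (2*t)).filter (Ld t y)).card : ℤ) = k := by
    have : ((Finset.range (2*t)).filter (Ld t y)).card
        = ((Finset.range t).filter (Ld t y)).card
          + ((Finset.Ico t (2*t)).filter (Ld t y)).card := by
      rw [hsplit, Finset.filter_union, Finset.card_union_of_disjoint hdisj]
    have := congrArg (fun n : ℕ => (n : ℤ)) this
    push_cast at this
    omega
  -- bijection r ↦ r + t between good rotations and ladder points in [t, 2t)
  have hbij : ((Finset.range t).filter (Gd t k y)).card
      = ((Finset.Ico t (2*t)).filter (Ld t y)).card := by
    apply Finset.card_bij' (fun r _ => r + t) (fun n _ => n - t)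
    · intro r hr
      have hr' := Finset.mem_filter.mp hr
      have hrt : r < t := Finset.mem_range.mp hr'.1
      refine Finset.mem_filter.mpr ⟨Finset.mem_Ico.mpr ⟨by omega, by omega⟩, ?_⟩
      exact Ld_of_Gd ht hk hge hsum (by omega) ((Gd_add_t ht hsum r).mp hr'.2)
    · intro n hn
      have hn' := Finset.mem_filter.mp hn
      have hnt := Finset.mem_Ico.mp hn'.1
      refine Finset.mem_filter.mpr ⟨Finset.mem_range.mpr (by omega), ?_⟩
      have hG : Gd t k y n := Gd_of_Ld ht hk hsum (by omega) hn'.2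
      have : n - t + t = n := by omega
      rw [← this] at hG
      exact (Gd_add_t ht hsum (n - t)).mpr hG
    · intro r hr; omega
    · intro n hn
      have hn' := Finset.mem_filter.mp hn
      have hnt := Finset.mem_Ico.mp hn'.1
      omega
  omega



/-- cyclic rotation of a tuple -/
def rotE (t : ℕ) [NeZero t] (c : Fin t) : (Fin t → ℤ) ≃ (Fin t → ℤ) where
  toFun v := fun i => v (i + c)
  invFun v := fun i => v (i - c)
  left_inv v := by funext i; simp
  right_inv v := by funext i; simp

open Fin.NatCast in
lemma rotE_apply_mk (t : ℕ) [NeZero t] (r i : ℕ) (v : Fin t → ℤ)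
    (h1 : i % t < t) (h2 : (r + i) % t < t) :
    rotE t (r : Fin t) v ⟨i % t, h1⟩ = v ⟨(r + i) % t, h2⟩ := by
  show v (⟨i % t, h1⟩ + (r : Fin t)) = _
  congr 1
  apply Fin.ext
  rw [Fin.add_def]
  simp only [Fin.val_natCast]
  conv_rhs => rw [Nat.add_mod]
  rw [Nat.add_comm (r % t) (i % t)]

end OtterAux

section SInf

lemma sInf_eq_iff_aux (S : Set ℕ) (t : ℕ) (ht : 1 ≤ t) :
    sInf S = t ↔ (t ∈ S ∧ ∀ j < t, j ∉ S) := by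
  constructor
  · intro h
    have hne : S.Nonempty := by
      by_contra hc
      rw [Set.not_nonempty_iff_eq_empty] at hc
      rw [hc, Nat.sInf_empty] at h
      omega
    refine ⟨h ▸ Nat.sInf_mem hne, fun j hj => Nat.notMem_of_lt_sInf (h ▸ hj)⟩
  · rintro ⟨h1, h2⟩
    apply le_antisymm (Nat.sInf_le h1)
    by_contra hc
    push_neg at hc
    exact h2 _ hc (Nat.sInf_mem ⟨t, h1⟩)

end SInf

open OtterAux
open Fin.NatCast

/-- Otter's hitting time theorem: let `W t = k + Y₁ + ⋯ + Y_t` be a random walk started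
at `k` whose i.i.d. integer increments satisfy `Y i ≥ -1` a.s. (here surely), and let
`τ₀ = inf {t : W t = 0}`. Then for all `t ≥ 1`,
`P_k(τ₀ = t) = (k/t) P_k(W t = 0)`. -/
theorem otter_hitting_time {Ω : Type*} [MeasurableSpace Ω] (μ : Measure Ω)
    [IsProbabilityMeasure μ] (Y : ℕ → Ω → ℤ) (hmeas : ∀ i, Measurable (Y i))
    (hindep : ProbabilityTheory.iIndepFun Y μ)
    (hident : ∀ i, Measure.map (Y i) μ = Measure.map (Y 0) μ)
    (hge : ∀ i ω, -1 ≤ Y i ω)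
    (k : ℕ) (τ : Ω → ℕ)
    (hτ : ∀ ω, τ ω = sInf {t | (k : ℤ) + ∑ i ∈ Finset.range t, Y i ω = 0})
    (t : ℕ) (ht : 1 ≤ t) :
    μ {ω | τ ω = t} =
      ((k : ENNReal) / (t : ENNReal)) *
        μ {ω | (k : ℤ) + ∑ i ∈ Finset.range t, Y i ω = 0} := by
  classical
  have ht0 : 0 < t := ht
  have hτt : ∀ ω, τ ω = t ↔
      (((k : ℤ) + ∑ i ∈ Finset.range t, Y i ω = 0) ∧
        ∀ j < t, (k : ℤ) + ∑ i ∈ Finset.range j, Y i ω ≠ 0) := by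
    intro ω
    rw [hτ ω, sInf_eq_iff_aux _ t ht]
    exact Iff.rfl
  rcases Nat.eq_zero_or_pos k with hk0 | hk
  · subst hk0
    have hemp : {ω | τ ω = t} = ∅ := by
      ext ω
      simp only [Set.mem_setOf_eq, Set.mem_empty_iff_false, iff_false]
      intro h
      have h0 := ((hτt ω).mp h).2 0 ht0
      simp at h0
    rw [hemp]
    simp
  -- main case : k ≥ 1
  have : NeZero t := ⟨ht0.ne'⟩
  set p : ℤ → ENNReal := fun x => μ (Y 0 ⁻¹' {x}) with hp
  set w : (Fin t → ℤ) → ENNReal := fun v => ∏ i : Fin t, p (v i) with hw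
  set V : Ω → (Fin t → ℤ) := fun ω i => Y i ω with hV
  have measY : ∀ (i : ℕ) (x : ℤ), μ (Y i ⁻¹' {x}) = p x := by
    intro i x
    have h1 : μ (Y i ⁻¹' {x}) = (μ.map (Y i)) {x} :=
      (Measure.map_apply (hmeas i) (measurableSet_singleton x)).symm
    rw [h1, hident i, Measure.map_apply (hmeas 0) (measurableSet_singleton x)]
  -- cylinder measure
  have hcyl : ∀ v : Fin t → ℤ, μ {ω | V ω = v} = w v := by
    intro v
    have hset : {ω | V ω = v}
        = ⋂ i ∈ Finset.range t, Y i ⁻¹' {v ⟨i % t, Nat.mod_lt i ht0⟩} := by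
      ext ω
      simp only [Set.mem_setOf_eq, Set.mem_iInter, Set.mem_preimage,
        Set.mem_singleton_iff, Finset.mem_range]
      constructor
      · intro h i hi
        have hv : v ⟨i % t, Nat.mod_lt i ht0⟩ = v ⟨i, hi⟩ := by
          congr 1
          exact Fin.ext (Nat.mod_eq_of_lt hi)
        rw [hv, ← h]
      · intro h
        funext i
        have := h i.val i.isLt
        have hv : v ⟨i.val % t, Nat.mod_lt i.val ht0⟩ = v i := by
          congr 1
          exact Fin.ext (Nat.mod_eq_of_lt i.isLt)
        rw [hv] at this
        exact this
    rw [hset, hindep.measure_inter_preimage_eq_mul (Finset.range t)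
      (fun i _ => measurableSet_singleton _)]
    have h2 : ∀ i ∈ Finset.range t,
        μ (Y i ⁻¹' {v ⟨i % t, Nat.mod_lt i ht0⟩}) = p (v ⟨i % t, Nat.mod_lt i ht0⟩) :=
      fun i _ => measY i _
    rw [Finset.prod_congr rfl h2, hw]
    rw [← Fin.prod_univ_eq_prod_range (fun x => p (v ⟨x % t, Nat.mod_lt x ht0⟩)) t]
    apply Finset.prod_congr rfl
    intro i _
    congr 1
    exact congrArg v (Fin.ext (Nat.mod_eq_of_lt i.isLt))
  -- cylinder sets are measurable
  have hcylm : ∀ v : Fin t → ℤ, MeasurableSet {ω | V ω = v} := by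
    intro v
    have hset : {ω | V ω = v} = ⋂ i : Fin t, Y i.val ⁻¹' {v i} := by
      ext ω
      simp only [Set.mem_setOf_eq, Set.mem_iInter, Set.mem_preimage, Set.mem_singleton_iff]
      exact ⟨fun h i => congrFun h i, fun h => funext h⟩
    rw [hset]
    exact MeasurableSet.iInter fun i => (hmeas i.val) (measurableSet_singleton _)
  -- measure of any event defined through V
  have hmS : ∀ S : Set (Fin t → ℤ), μ (V ⁻¹' S) = ∑' v, S.indicator w v := by
    intro S
    have hU : V ⁻¹' S = ⋃ v ∈ S, {ω | V ω = v} := by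
      ext ω
      simp only [Set.mem_preimage, Set.mem_iUnion, Set.mem_setOf_eq, exists_prop]
      exact ⟨fun h => ⟨V ω, h, rfl⟩, fun ⟨v, hv, hvv⟩ => hvv ▸ hv⟩
    rw [hU, measure_biUnion S.to_countable ?hd (fun v _ => hcylm v)]
    · rw [← tsum_subtype S w]
      exact tsum_congr fun v => hcyl v
    case hd =>
      intro a _ b _ hab
      simp only [Function.onFun]
      rw [Set.disjoint_left]
      intro ω ha hb
      exact hab (ha ▸ hb ▸ rfl)
  -- rotation invariance of w
  have winv : ∀ (c : Fin t) (v : Fin t → ℤ), w (rotE t c v) = w v := by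
    intro c v
    rw [hw]
    exact Fintype.prod_equiv (Equiv.addRight c) _ _ (fun i => rfl)
  -- rotation invariance of the abstract measure
  have minv : ∀ (c : Fin t) (S : Set (Fin t → ℤ)),
      (∑' v, ((rotE t c) ⁻¹' S).indicator w v) = ∑' v, S.indicator w v := by
    intro c S
    rw [← Equiv.tsum_eq (rotE t c).symm (((rotE t c) ⁻¹' S).indicator w)]
    apply tsum_congr
    intro u
    have hwu : w ((rotE t c).symm u) = w u := by
      conv_rhs => rw [← Equiv.apply_symm_apply (rotE t c) u]
      exact (winv c _).symm
    simp only [Set.indicator_apply, Set.mem_preimage, Equiv.apply_symm_apply, hwu]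
  -- the target sets
  set AS : Set (Fin t → ℤ) := {v | (k:ℤ) + ∑ i : Fin t, v i = 0} with hAS
  set BS : Set (Fin t → ℤ) := {v | ((k:ℤ) + ∑ i : Fin t, v i = 0) ∧
      ∀ j < t, (k:ℤ) + ∑ i ∈ Finset.range j, v ⟨i % t, Nat.mod_lt i ht0⟩ ≠ 0} with hBS
  -- event identifications
  have hsum1 : ∀ ω, ∑ i : Fin t, V ω i = ∑ i ∈ Finset.range t, Y i ω := by
    intro ω
    exact Fin.sum_univ_eq_sum_range (fun i => Y i ω) t
  have hsum2 : ∀ (v : Fin t → ℤ) (j : ℕ), j ≤ t →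
      ∑ i ∈ Finset.range j, v ⟨i % t, Nat.mod_lt i ht0⟩
        = ∑ i ∈ Finset.range j, (fun m => v ⟨m % t, Nat.mod_lt m ht0⟩) i :=
    fun v j _ => rfl
  have hevB : {ω | τ ω = t} = V ⁻¹' BS := by
    ext ω
    rw [Set.mem_setOf_eq, hτt ω, Set.mem_preimage, hBS, Set.mem_setOf_eq, hsum1 ω]
    constructor
    · rintro ⟨h1, h2⟩
      refine ⟨h1, fun j hj => ?_⟩
      have heq : ∑ i ∈ Finset.range j, V ω ⟨i % t, Nat.mod_lt i ht0⟩
          = ∑ i ∈ Finset.range j, Y i ω := by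
        apply Finset.sum_congr rfl
        intro i hi
        have hi' : i < t := lt_of_lt_of_le (Finset.mem_range.mp hi) hj.le
        show Y ((⟨i % t, Nat.mod_lt i ht0⟩ : Fin t) : ℕ) ω = Y i ω
        congr 1
        exact Nat.mod_eq_of_lt hi'
      rw [heq]
      exact h2 j hj
    · rintro ⟨h1, h2⟩
      refine ⟨h1, fun j hj => ?_⟩
      have heq : ∑ i ∈ Finset.range j, V ω ⟨i % t, Nat.mod_lt i ht0⟩
          = ∑ i ∈ Finset.range j, Y i ω := by
        apply Finset.sum_congr rfl
        intro i hi
        have hi' : i < t := lt_of_lt_of_le (Finset.mem_range.mp hi) hj.le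
        show Y ((⟨i % t, Nat.mod_lt i ht0⟩ : Fin t) : ℕ) ω = Y i ω
        congr 1
        exact Nat.mod_eq_of_lt hi'
      rw [← heq]
      exact h2 j hj
  have hevA : {ω | (k : ℤ) + ∑ i ∈ Finset.range t, Y i ω = 0} = V ⁻¹' AS := by
    ext ω
    rw [Set.mem_setOf_eq, Set.mem_preimage, hAS, Set.mem_setOf_eq, hsum1 ω]
  -- relate rotated membership in BS to the cycle-lemma predicate
  have hrotB : ∀ (r : ℕ) (v : Fin t → ℤ),
      rotE t (r : Fin t) v ∈ BS ↔ (v ∈ AS ∧ ∀ j < t,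
        (k:ℤ) + ∑ i ∈ Finset.range j,
          (fun m => v ⟨m % t, Nat.mod_lt m ht0⟩) ((r + i) % t) ≠ 0) := by
    intro r v
    rw [hBS, Set.mem_setOf_eq, hAS, Set.mem_setOf_eq]
    have hfst : ∑ i : Fin t, rotE t (r : Fin t) v i = ∑ i : Fin t, v i :=
      Fintype.sum_equiv (Equiv.addRight (r : Fin t)) _ _ (fun i => rfl)
    rw [hfst]
    apply and_congr Iff.rfl
    apply forall_congr'
    intro j
    apply imp_congr Iff.rfl
    have hterm : ∀ i : ℕ, rotE t (r : Fin t) v ⟨i % t, Nat.mod_lt i ht0⟩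
        = (fun m => v ⟨m % t, Nat.mod_lt m ht0⟩) ((r + i) % t) := by
      intro i
      rw [rotE_apply_mk t r i v (Nat.mod_lt i ht0) (Nat.mod_lt _ ht0)]
      show v _ = v _
      exact congrArg v (Fin.ext (Nat.mod_mod_of_dvd (r+i) (dvd_refl t)).symm)
    rw [Finset.sum_congr rfl (fun i _ => hterm i)]
  -- the pointwise cycle-lemma identity
  have hpt : ∀ v : Fin t → ℤ,
      (∑ r ∈ Finset.range t, ((rotE t (r : Fin t)) ⁻¹' BS).indicator w v)
        = (k : ENNReal) * AS.indicator w v := by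
    intro v
    have hsum_ind : ∑ r ∈ Finset.range t, ((rotE t (r : Fin t)) ⁻¹' BS).indicator w v
        = (((Finset.range t).filter (fun r : ℕ => rotE t (r : Fin t) v ∈ BS)).card : ℕ) * w v := by
      calc ∑ r ∈ Finset.range t, ((rotE t (r : Fin t)) ⁻¹' BS).indicator w v
          = ∑ r ∈ Finset.range t, if rotE t (r : Fin t) v ∈ BS then w v else 0 := by
            apply Finset.sum_congr rfl
            intro r _
            by_cases h : rotE t (r : Fin t) v ∈ BS
            · rw [if_pos h]; exact Set.indicator_of_mem (Set.mem_preimage.mpr h) w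
            · rw [if_neg h]; exact Set.indicator_of_notMem (fun hc => h (Set.mem_preimage.mp hc)) w
        _ = ∑ r ∈ (Finset.range t).filter (fun r : ℕ => rotE t (r : Fin t) v ∈ BS), w v :=
            (Finset.sum_filter _ _).symm
        _ = _ := by rw [Finset.sum_const, nsmul_eq_mul]
    by_cases hgv : ∀ i, -1 ≤ v i
    · by_cases hAv : v ∈ AS
      · have hsum' : (k:ℤ) + ∑ i ∈ Finset.range t,
            (fun m => v ⟨m % t, Nat.mod_lt m ht0⟩) i = 0 := by
          have h1 : ∑ i ∈ Finset.range t, (fun m => v ⟨m % t, Nat.mod_lt m ht0⟩) i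
              = ∑ i : Fin t, v i := by
            rw [← Fin.sum_univ_eq_sum_range (fun m => v ⟨m % t, Nat.mod_lt m ht0⟩) t]
            apply Finset.sum_congr rfl
            intro i _
            exact congrArg v (Fin.ext (Nat.mod_eq_of_lt i.isLt))
          rw [h1]
          exact hAv
        have hcard := OtterAux.cycle_count t k ht0 hk
          (fun m => v ⟨m % t, Nat.mod_lt m ht0⟩) (fun m => hgv _) hsum'
        have hfil : (Finset.range t).filter (fun r : ℕ => rotE t (r : Fin t) v ∈ BS)
            = (Finset.range t).filter (fun r => ∀ j < t, (k:ℤ) +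
                ∑ i ∈ Finset.range j,
                  (fun m => v ⟨m % t, Nat.mod_lt m ht0⟩) ((r + i) % t) ≠ 0) := by
          apply Finset.filter_congr
          intro r _
          rw [hrotB r v]
          simp [hAv]
        rw [hsum_ind, hfil, hcard, Set.indicator_of_mem hAv w]
      · have hnone : ∀ r : ℕ, ¬(rotE t (r : Fin t) v ∈ BS) :=
          fun r h => hAv ((hrotB r v).mp h).1
        have hfil : (Finset.range t).filter (fun r : ℕ => rotE t (r : Fin t) v ∈ BS) = ∅ :=
          Finset.filter_eq_empty_iff.mpr (fun {r} _ => hnone r)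
        rw [hsum_ind, hfil, Set.indicator_of_notMem hAv w]
        simp
    · push_neg at hgv
      obtain ⟨i, hi⟩ := hgv
      have hpv : p (v i) = 0 := by
        rw [hp]
        convert measure_empty
        · ext ω
          simp only [Set.mem_preimage, Set.mem_singleton_iff, Set.mem_empty_iff_false,
            iff_false]
          intro h
          have := hge 0 ω
          omega
        · infer_instance
      have hwv : w v = 0 := by
        rw [hw]
        exact Finset.prod_eq_zero (Finset.mem_univ i) hpv
      have hind0 : AS.indicator w v = 0 := by
        by_cases h : v ∈ AS
        · rw [Set.indicator_of_mem h w, hwv]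
        · exact Set.indicator_of_notMem h w
      rw [hsum_ind, hwv, hind0, mul_zero, mul_zero]
  -- main identity
  have key : (t : ENNReal) * μ (V ⁻¹' BS) = (k : ENNReal) * μ (V ⁻¹' AS) := by
    have h1 : ∀ r ∈ Finset.range t, μ (V ⁻¹' BS)
        = ∑' v, ((rotE t (r : Fin t)) ⁻¹' BS).indicator w v := by
      intro r _
      rw [hmS BS, ← minv (r : Fin t) BS]
    calc (t : ENNReal) * μ (V ⁻¹' BS)
        = ∑ _r ∈ Finset.range t, μ (V ⁻¹' BS) := by
          rw [Finset.sum_const, Finset.card_range, nsmul_eq_mul]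
      _ = ∑ r ∈ Finset.range t, ∑' v, ((rotE t (r : Fin t)) ⁻¹' BS).indicator w v :=
          Finset.sum_congr rfl h1
      _ = ∑' v, ∑ r ∈ Finset.range t, ((rotE t (r : Fin t)) ⁻¹' BS).indicator w v :=
          (Summable.tsum_finsetSum (fun i _ => ENNReal.summable)).symm
      _ = ∑' v, (k : ENNReal) * AS.indicator w v := tsum_congr hpt
      _ = (k : ENNReal) * ∑' v, AS.indicator w v := ENNReal.tsum_mul_left
      _ = (k : ENNReal) * μ (V ⁻¹' AS) := by rw [hmS AS]
  rw [hevB, hevA]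
  have htne : (t : ENNReal) ≠ 0 := by exact_mod_cast ht0.ne'
  have httop : (t : ENNReal) ≠ ⊤ := ENNReal.natCast_ne_top t
  rw [← ENNReal.eq_div_iff htne httop] at key
  rw [key, div_eq_mul_inv, div_eq_mul_inv, mul_right_comm]
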